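/- Let d, k ∈ ℕ+, let α ∈ ℕ^d with ‖α‖_1 ≤ k, and let P(x) = x^α = x_1^{α_1} x_2^{α_2} ⋯ x_d^{α_d}. Then for any N, L ∈ ℕ+ there exists a function φ : ℝ^d → ℝ implemented by a ReLU FNN with width at most 9(N+1) + k − 1 and depth at most 7k²L such that |φ(x) − P(x)| ≤ 9k·(N+1)^{−7kL} for every x ∈ [0,1]^d. -/

import Mathlib

open Real

noncomputable section

/-- `A` is an affine map from `ℝ^m` to `ℝ^n`. -/
def IsAffineMap (m n : ℕ) (A : (Fin m → ℝ) → (Fin n → ℝ)) : Prop :=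
  ∃ (M : Matrix (Fin n) (Fin m) ℝ) (b : Fin n → ℝ), ∀ x, A x = M.mulVec x + b

/-- `φ : ℝ^d → ℝ` is realized by a ReLU network with exactly `L'` hidden layers,
each of positive width at most `W`. -/
def ReLUNetRec (W : ℝ) : ℕ → ∀ d : ℕ, ((Fin d → ℝ) → ℝ) → Prop
  | 0, d, φ => ∃ A : (Fin d → ℝ) → (Fin 1 → ℝ), IsAffineMap d 1 A ∧ ∀ x, φ x = A x 0
  | L' + 1, d, φ => ∃ n : ℕ, 0 < n ∧ (n : ℝ) ≤ W ∧
      ∃ A : (Fin d → ℝ) → (Fin n → ℝ), IsAffineMap d n A ∧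
        ∃ ψ : (Fin n → ℝ) → ℝ, ReLUNetRec W L' n ψ ∧
          ∀ x, φ x = ψ (fun i => max (A x i) 0)

/-- `φ : ℝ^d → ℝ` is implemented by a ReLU FNN with width at most `W` and depth at most `D`. -/
def ImplementedBy (d : ℕ) (W D : ℝ) (φ : (Fin d → ℝ) → ℝ) : Prop :=
  ∃ L' : ℕ, (L' : ℝ) ≤ D ∧ ReLUNetRec W L' d φ

/-- one-dimensional-input version of `ImplementedBy`. -/
def ImplementedBy1 (W D : ℝ) (φ : ℝ → ℝ) : Prop :=
  ImplementedBy 1 W D (fun x => φ (x 0))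

/-- two-dimensional-input version of `ImplementedBy`. -/
def ImplementedBy2 (W D : ℝ) (φ : ℝ → ℝ → ℝ) : Prop :=
  ImplementedBy 2 W D (fun x => φ (x 0) (x 1))

/-- the unit cube `[0,1]^d`. -/
def unitCube (d : ℕ) : Set (Fin d → ℝ) := Set.Icc 0 1

/-! ### Affine functionals on finite coordinate spaces -/

def AffF (ι : Type) [Fintype ι] (f : (ι → ℝ) → ℝ) : Prop :=
  ∃ (c : ι → ℝ) (b : ℝ), ∀ x, f x = (∑ a, c a * x a) + b

namespace AffF

variable {ι κ : Type} [Fintype ι] [Fintype κ]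

theorem const (b : ℝ) : AffF ι (fun _ => b) :=
  ⟨0, b, fun x => by simp⟩

theorem proj (a : ι) : AffF ι (fun x => x a) := by
  classical
  exact ⟨fun a' => if a' = a then 1 else 0, 0, fun x => by
    simp [ite_mul, Finset.sum_ite_eq']⟩

theorem add {f g} (hf : AffF ι f) (hg : AffF ι g) : AffF ι (fun x => f x + g x) := by
  obtain ⟨c, b, hc⟩ := hf; obtain ⟨c', b', hc'⟩ := hg
  exact ⟨c + c', b + b', fun x => by simp [hc, hc', Finset.sum_add_distrib, add_mul]; ring⟩

theorem smul (r : ℝ) {f} (hf : AffF ι f) : AffF ι (fun x => r * f x) := by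
  obtain ⟨c, b, hc⟩ := hf
  exact ⟨fun a => r * c a, r * b, fun x => by simp [hc, Finset.mul_sum, mul_add, mul_assoc]⟩

theorem neg {f} (hf : AffF ι f) : AffF ι (fun x => -f x) := by
  simpa using hf.smul (-1)

theorem sub {f g} (hf : AffF ι f) (hg : AffF ι g) : AffF ι (fun x => f x - g x) := by
  simpa [sub_eq_add_neg] using hf.add hg.neg

theorem sum {γ : Type} (s : Finset γ) (f : γ → ((ι → ℝ) → ℝ)) (hf : ∀ i ∈ s, AffF ι (f i)) :
    AffF ι (fun x => ∑ i ∈ s, f i x) := by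
  classical
  induction s using Finset.induction with
  | empty => simpa using const 0
  | insert a s hne ih =>
    rw [show (fun x => ∑ i ∈ insert a s, f i x) = fun x => f a x + ∑ i ∈ s, f i x by
      funext x; rw [Finset.sum_insert hne]]
    exact (hf a (Finset.mem_insert_self a s)).add
      (ih fun i hi => hf i (Finset.mem_insert_of_mem hi))

theorem congr {f g : (ι → ℝ) → ℝ} (hg : AffF ι g) (h : ∀ x, f x = g x) : AffF ι f := by
  obtain ⟨c, b, hc⟩ := hg
  exact ⟨c, b, fun x => (h x).trans (hc x)⟩

theorem comp_equiv (e : ι ≃ κ) {f : (ι → ℝ) → ℝ} (hf : AffF ι f) :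
    AffF κ (fun x => f (fun a => x (e a))) := by
  obtain ⟨c, b, hc⟩ := hf
  refine ⟨fun j => c (e.symm j), b, fun x => ?_⟩
  simp only [hc]
  congr 1
  exact Fintype.sum_equiv e _ _ (fun a => by simp)

end AffF

theorem isAffineMap_of_lanes {m p : ℕ} (A : (Fin m → ℝ) → (Fin p → ℝ))
    (h : ∀ i, AffF (Fin m) (fun st => A st i)) : IsAffineMap m p A := by
  choose c b hc using h
  refine ⟨Matrix.of c, b, fun x => ?_⟩
  funext i
  simp [Matrix.mulVec, dotProduct, hc]

/-! ### Segments of ReLU layers over an abstract lane type -/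

inductive Seg (ι : Type) [Fintype ι] : ℕ → ((ι → ℝ) → (ι → ℝ)) → Prop
  | id : Seg ι 0 (fun st => st)
  | step {T F} (A : (ι → ℝ) → (ι → ℝ)) (hA : ∀ a, AffF ι (fun st => A st a))
      (h : Seg ι T F) : Seg ι (T + 1) (fun st => F (fun a => max (A st a) 0))

theorem Seg.comp {ι : Type} [Fintype ι] {T1 T2 : ℕ} {F1 F2 : (ι → ℝ) → (ι → ℝ)}
    (h1 : Seg ι T1 F1) (h2 : Seg ι T2 F2) : Seg ι (T2 + T1) (fun st => F2 (F1 st)) := by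
  induction h1 with
  | id => exact h2
  | step A hA h ih => exact ih.step A hA

theorem seg_to_net {ι : Type} [Fintype ι] {W : ℝ} {m : ℕ} (e : ι ≃ Fin m)
    (hm : 0 < m) (hW : (m : ℝ) ≤ W) :
    ∀ {T : ℕ} {F : (ι → ℝ) → (ι → ℝ)}, Seg ι T F →
    ∀ {d : ℕ} (A0 : (Fin d → ℝ) → (ι → ℝ)), (∀ a, AffF (Fin d) (fun x => A0 x a)) →
    ∀ (C : (ι → ℝ) → ℝ), AffF ι C →
    ReLUNetRec W (T + 1) d (fun x => C (F (fun a => max (A0 x a) 0))) := by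
  intro T F hF
  induction hF with
  | id =>
    intro d A0 hA0 C hC
    refine ⟨m, hm, hW, fun x j => A0 x (e.symm j), ?_, fun st => C (fun a => st (e a)), ?_, ?_⟩
    · exact isAffineMap_of_lanes _ fun j => hA0 (e.symm j)
    · refine ⟨fun st _ => C (fun a => st (e a)), ?_, fun st => rfl⟩
      exact isAffineMap_of_lanes _ fun _ => hC.comp_equiv e
    · intro x; simp
  | step A hA h ih =>
    rename_i T' F'
    intro d A0 hA0 C hC
    refine ⟨m, hm, hW, fun x j => A0 x (e.symm j), ?_,
      fun st => C (F' (fun a => max (A (fun a' => st (e a')) a) 0)), ?_, ?_⟩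
    · exact isAffineMap_of_lanes _ fun j => hA0 (e.symm j)
    · exact ih (fun st => A (fun a' => st (e a'))) (fun a => (hA a).comp_equiv e) C hC
    · intro x
      simp


def gcoef (n i : ℕ) : ℝ := if i = 0 then (n : ℝ) else (-1)^i * (2*n)
def ecoef (n i : ℕ) : ℝ := if i = 0 then ((n:ℝ)-1)/n else -2/n
def gfun (n : ℕ) (t : ℝ) : ℝ := ∑ i ∈ Finset.range n, gcoef n i * max (t - i/n) 0
def Efun (n : ℕ) (t : ℝ) : ℝ := ∑ i ∈ Finset.range n, ecoef n i * max (t - i/n) 0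

lemma sum_pm (j : ℕ) : ∑ i ∈ Finset.range j, ((-1:ℝ))^(i+1) = if Even j then 0 else -1 := by
  induction j with
  | zero => simp
  | succ j ih =>
    rw [Finset.sum_range_succ, ih]
    rcases Nat.even_or_odd j with h | h
    · simp [h, Nat.even_add_one, Odd.neg_one_pow (h.add_one)]
    · simp [Nat.not_even_iff_odd.2 h, Nat.even_add_one, Even.neg_one_pow (h.add_one)]

lemma sum_pm' (j : ℕ) :
    ∑ i ∈ Finset.range j, ((-1:ℝ))^(i+1) * ((i:ℝ)+1)
      = if Even j then (j:ℝ)/2 else -((j:ℝ)+1)/2 := by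
  induction j with
  | zero => simp
  | succ j ih =>
    rw [Finset.sum_range_succ, ih]
    rcases Nat.even_or_odd j with h | h
    · rw [if_pos h, if_neg (by rw [Nat.even_add_one]; exact not_not_intro h),
        Odd.neg_one_pow h.add_one]
      push_cast
      ring
    · rw [if_neg (Nat.not_even_iff_odd.2 h), if_pos (by rw [Nat.even_add_one]; exact Nat.not_even_iff_odd.2 h),
        Even.neg_one_pow h.add_one]
      push_cast
      ring

lemma sum_id1 (j : ℕ) : ∑ i ∈ Finset.range j, ((i:ℝ)+1) = j*(j+1)/2 := by
  induction j with
  | zero => simp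
  | succ j ih => rw [Finset.sum_range_succ, ih]; push_cast; ring

theorem gfun_piece {n j : ℕ} (hn : 0 < n) (hj : j < n) {t : ℝ}
    (h1 : (j:ℝ)/n ≤ t) (h2 : t ≤ ((j:ℝ)+1)/n) :
    gfun n t = if Even j then n*t - j else (j:ℝ)+1 - n*t := by
  have hn' : (0:ℝ) < n := by exact_mod_cast hn
  have step1 : gfun n t = ∑ i ∈ Finset.range (j+1), gcoef n i * (t - i/n) := by
    rw [gfun, ← Finset.sum_subset (Finset.range_subset_range.mpr hj) ?_]
    · refine Finset.sum_congr rfl fun i hi => ?_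
      have hi' : (i:ℝ) ≤ j := by exact_mod_cast Nat.lt_succ_iff.mp (Finset.mem_range.mp hi)
      have : (i:ℝ)/n ≤ t := le_trans (by gcongr) h1
      rw [max_eq_left (by linarith)]
    · intro i _ hi2
      have hi' : (j:ℝ)+1 ≤ i := by exact_mod_cast Nat.succ_le_of_lt (by simpa using Finset.mem_range.not.mp hi2)
      have : t ≤ (i:ℝ)/n := le_trans h2 (by gcongr)
      rw [max_eq_right (by linarith), mul_zero]
  rw [step1, Finset.sum_range_succ']
  have step2 : ∀ i ∈ Finset.range j, gcoef n (i+1) * (t - (↑(i+1):ℝ)/n)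
      = (2*(n:ℝ)*t) * (-1)^(i+1) - 2*((-1)^(i+1) * ((i:ℝ)+1)) := by
    intro i _
    rw [gcoef, if_neg (Nat.succ_ne_zero i)]
    push_cast
    field_simp
  rw [Finset.sum_congr rfl step2, Finset.sum_sub_distrib, ← Finset.mul_sum, ← Finset.mul_sum,
    sum_pm, sum_pm']
  simp only [gcoef, if_pos rfl]
  rcases Nat.even_or_odd j with h | h
  · simp only [h, if_true]
    push_cast
    ring
  · simp only [Nat.not_even_iff_odd.2 h, if_false]
    push_cast
    ring

theorem Efun_piece {n j : ℕ} (hn : 0 < n) (hj : j < n) {t : ℝ}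
    (h1 : (j:ℝ)/n ≤ t) (h2 : t ≤ ((j:ℝ)+1)/n) :
    Efun n t = ((n:ℝ) - 1 - 2*j) * t/n + j*(j+1)/n^2 := by
  have hn' : (0:ℝ) < n := by exact_mod_cast hn
  have step1 : Efun n t = ∑ i ∈ Finset.range (j+1), ecoef n i * (t - i/n) := by
    rw [Efun, ← Finset.sum_subset (Finset.range_subset_range.mpr hj) ?_]
    · refine Finset.sum_congr rfl fun i hi => ?_
      have hi' : (i:ℝ) ≤ j := by exact_mod_cast Nat.lt_succ_iff.mp (Finset.mem_range.mp hi)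
      have : (i:ℝ)/n ≤ t := le_trans (by gcongr) h1
      rw [max_eq_left (by linarith)]
    · intro i _ hi2
      have hi' : (j:ℝ)+1 ≤ i := by exact_mod_cast Nat.succ_le_of_lt (by simpa using Finset.mem_range.not.mp hi2)
      have : t ≤ (i:ℝ)/n := le_trans h2 (by gcongr)
      rw [max_eq_right (by linarith), mul_zero]
  rw [step1, Finset.sum_range_succ']
  have step2 : ∀ i ∈ Finset.range j, ecoef n (i+1) * (t - (↑(i+1):ℝ)/n)
      = (-2/n)*t + (2/n^2)*((i:ℝ)+1) := by
    intro i _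
    rw [ecoef, if_neg (Nat.succ_ne_zero i)]
    push_cast
    field_simp
    ring
  rw [Finset.sum_congr rfl step2, Finset.sum_add_distrib, ← Finset.mul_sum, ← Finset.mul_sum, sum_id1]
  simp only [Finset.sum_const, Finset.card_range, nsmul_eq_mul]
  simp only [ecoef, if_pos rfl]
  push_cast
  field_simp
  ring

theorem exists_piece {n : ℕ} (hn : 0 < n) {t : ℝ} (ht : t ∈ Set.Icc (0:ℝ) 1) :
    ∃ j : ℕ, j < n ∧ (j:ℝ)/n ≤ t ∧ t ≤ ((j:ℝ)+1)/n := by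
  have hn' : (0:ℝ) < n := by exact_mod_cast hn
  obtain ⟨ht0, ht1⟩ := ht
  by_cases h : Nat.floor ((n:ℝ)*t) < n
  · refine ⟨Nat.floor ((n:ℝ)*t), h, ?_, ?_⟩
    · rw [div_le_iff₀ hn']
      calc (↑(Nat.floor ((n:ℝ)*t)) : ℝ) ≤ (n:ℝ)*t := Nat.floor_le (by positivity)
        _ = t * n := by ring
    · rw [le_div_iff₀ hn']
      have := Nat.lt_floor_add_one ((n:ℝ)*t)
      linarith [this]
  · push_neg at h
    have h1 : (n:ℝ) ≤ (n:ℝ)*t := by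
      calc (n:ℝ) ≤ (Nat.floor ((n:ℝ)*t) : ℝ) := by exact_mod_cast h
        _ ≤ (n:ℝ)*t := Nat.floor_le (by positivity)
    have ht1' : t = 1 := le_antisymm ht1 (by nlinarith)
    refine ⟨n-1, Nat.sub_lt hn one_pos, ?_, ?_⟩
    · rw [ht1', div_le_one hn']
      exact_mod_cast Nat.sub_le n 1
    · have h1n : 1 ≤ n := hn
      rw [ht1', le_div_iff₀ hn', Nat.cast_sub h1n]
      push_cast
      linarith

theorem gfun_mem {n : ℕ} (hn : 0 < n) {t : ℝ} (ht : t ∈ Set.Icc (0:ℝ) 1) :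
    gfun n t ∈ Set.Icc (0:ℝ) 1 := by
  have hn' : (0:ℝ) < n := by exact_mod_cast hn
  obtain ⟨j, hj, h1, h2⟩ := exists_piece hn ht
  rw [gfun_piece hn hj h1 h2]
  have hj' : (j:ℝ) + 1 ≤ n := by exact_mod_cast hj
  rw [div_le_iff₀ hn'] at h1
  rw [le_div_iff₀ hn'] at h2
  rcases Nat.even_or_odd j with h | h
  · rw [if_pos h]; constructor <;> nlinarith
  · rw [if_neg (Nat.not_even_iff_odd.2 h)]; constructor <;> nlinarith

theorem Efun_nonneg {n : ℕ} (hn : 0 < n) {t : ℝ} (ht : t ∈ Set.Icc (0:ℝ) 1) :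
    0 ≤ Efun n t := by
  have hn' : (0:ℝ) < n := by exact_mod_cast hn
  obtain ⟨j, hj, h1, h2⟩ := exists_piece hn ht
  rw [Efun_piece hn hj h1 h2]
  have hj' : (j:ℝ) + 1 ≤ n := by exact_mod_cast hj
  rw [div_le_iff₀ hn'] at h1
  rw [le_div_iff₀ hn'] at h2
  have hj0 : (0:ℝ) ≤ j := Nat.cast_nonneg j
  rcases le_or_gt ((n:ℝ) - 1 - 2*j) 0 with h | h
  · have key : 0 ≤ ((n:ℝ) - 1 - 2*j) * (t*n) + j*(j+1) := by nlinarith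
    have : ((n:ℝ) - 1 - 2*j) * t/n + j*(j+1)/n^2 = (((n:ℝ) - 1 - 2*j) * (t*n) + j*(j+1))/n^2 := by
      field_simp
    rw [this]; positivity
  · have key : 0 ≤ ((n:ℝ) - 1 - 2*j) * (t*n) + j*(j+1) := by nlinarith
    have : ((n:ℝ) - 1 - 2*j) * t/n + j*(j+1)/n^2 = (((n:ℝ) - 1 - 2*j) * (t*n) + j*(j+1))/n^2 := by
      field_simp
    rw [this]; positivity

theorem Efun_id {n : ℕ} (hn : 0 < n) {t : ℝ} (ht : t ∈ Set.Icc (0:ℝ) 1) :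
    Efun n t = t - t^2 - (gfun n t - (gfun n t)^2)/(n:ℝ)^2 := by
  have hn' : (0:ℝ) < n := by exact_mod_cast hn
  obtain ⟨j, hj, h1, h2⟩ := exists_piece hn ht
  rw [Efun_piece hn hj h1 h2, gfun_piece hn hj h1 h2]
  rcases Nat.even_or_odd j with h | h
  · rw [if_pos h]; field_simp; ring
  · rw [if_neg (Nat.not_even_iff_odd.2 h)]; field_simp; ring

theorem gIter_mem {n : ℕ} (hn : 0 < n) {t : ℝ} (ht : t ∈ Set.Icc (0:ℝ) 1) (r : ℕ) :
    (gfun n)^[r] t ∈ Set.Icc (0:ℝ) 1 := by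
  induction r with
  | zero => simpa using ht
  | succ r ih => rw [Function.iterate_succ_apply']; exact gfun_mem hn ih

/-! ### The approximate squaring function -/

def Ffun (n s : ℕ) (t : ℝ) : ℝ :=
  t - ∑ i ∈ Finset.range s, (1/(n:ℝ)^2)^i * Efun n ((gfun n)^[i] t)

theorem Ffun_rec {n : ℕ} (hn : 0 < n) (s : ℕ) (t : ℝ) :
    Ffun n (s+1) t = t - Efun n t - (1/(n:ℝ)^2) * (gfun n t - Ffun n s (gfun n t)) := by
  have hn' : ((n:ℝ)^2) ≠ 0 := by positivity
  rw [Ffun, Finset.sum_range_succ', Ffun]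
  simp only [Function.iterate_succ_apply, Function.iterate_zero_apply, pow_zero, one_mul]
  rw [Finset.sum_congr rfl (fun i _ => by rw [pow_succ]; ring :
    ∀ i ∈ Finset.range s, (1/(n:ℝ)^2)^(i+1) * Efun n ((gfun n)^[i] (gfun n t))
      = (1/(n:ℝ)^2) * ((1/(n:ℝ)^2)^i * Efun n ((gfun n)^[i] (gfun n t)))),
    ← Finset.mul_sum]
  ring

theorem Ffun_err {n : ℕ} (hn : 0 < n) (s : ℕ) :
    ∀ t ∈ Set.Icc (0:ℝ) 1, |Ffun n s t - t^2| ≤ (1/(n:ℝ)^2)^s / 4 := by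
  have hn' : (0:ℝ) < n := by exact_mod_cast hn
  induction s with
  | zero =>
    intro t ⟨ht0, ht1⟩
    simp only [Ffun, Finset.range_zero, Finset.sum_empty, sub_zero, pow_zero]
    rw [abs_le]
    constructor <;> nlinarith [sq_nonneg (t - 1/2)]
  | succ s ih =>
    intro t ht
    have hg := gfun_mem hn ht
    have key : Ffun n (s+1) t - t^2 = (1/(n:ℝ)^2) * (Ffun n s (gfun n t) - (gfun n t)^2) := by
      rw [Ffun_rec hn, Efun_id hn ht]
      field_simp
      ring
    rw [key, abs_mul, abs_of_nonneg (by positivity : (0:ℝ) ≤ 1/(n:ℝ)^2)]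
    calc 1/(n:ℝ)^2 * |Ffun n s (gfun n t) - (gfun n t)^2|
        ≤ 1/(n:ℝ)^2 * ((1/(n:ℝ)^2)^s / 4) := by
          exact mul_le_mul_of_nonneg_left (ih _ hg) (by positivity)
      _ = (1/(n:ℝ)^2)^(s+1) / 4 := by ring

/-! ### scaled running sums -/

def Vfun (n : ℕ) (t : ℝ) : ℕ → ℝ
  | 0 => 0
  | r+1 => (n:ℝ)^2 * Vfun n t r + (n:ℝ)^2 * Efun n ((gfun n)^[r] t)

theorem Vfun_nonneg {n : ℕ} (hn : 0 < n) {t : ℝ} (ht : t ∈ Set.Icc (0:ℝ) 1) (r : ℕ) :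
    0 ≤ Vfun n t r := by
  induction r with
  | zero => simp [Vfun]
  | succ r ih =>
    have := Efun_nonneg hn (gIter_mem hn ht r)
    have h2 : (0:ℝ) ≤ (n:ℝ)^2 := by positivity
    rw [Vfun]
    nlinarith

theorem Vfun_sum {n : ℕ} (hn : 0 < n) (t : ℝ) (r : ℕ) :
    (1/(n:ℝ)^2)^r * (Vfun n t r + Efun n ((gfun n)^[r] t))
      = ∑ i ∈ Finset.range (r+1), (1/(n:ℝ)^2)^i * Efun n ((gfun n)^[i] t) := by
  have hn' : ((n:ℝ)^2) ≠ 0 := by positivity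
  induction r with
  | zero => simp [Vfun]
  | succ r ih =>
    rw [Finset.sum_range_succ, ← ih, Vfun]
    have key : (1/(n:ℝ)^2)^(r+1) * (n:ℝ)^2 = (1/(n:ℝ)^2)^r := by
      rw [pow_succ, mul_assoc, one_div, inv_mul_cancel₀ hn', mul_one]
    linear_combination (Vfun n t r + Efun n ((gfun n)^[r] t)) * key

theorem Ffun_V {n : ℕ} (hn : 0 < n) (s : ℕ) (hs : 1 ≤ s) (t : ℝ) :
    Ffun n s t = t - (1/(n:ℝ)^2)^(s-1) * (Vfun n t (s-1) + Efun n ((gfun n)^[s-1] t)) := by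
  cases s with
  | zero => omega
  | succ r =>
    simp only [Nat.succ_sub_one]
    rw [Ffun, Vfun_sum hn]

/-! ### multiplication and clamping -/

def multF (n s : ℕ) (a b : ℝ) : ℝ :=
  2 * Ffun n s ((a+b)/2) - Ffun n s a / 2 - Ffun n s b / 2

def clampF (z : ℝ) : ℝ := 1 - max (1 - max z 0) 0

theorem clampF_mem (z : ℝ) : clampF z ∈ Set.Icc (0:ℝ) 1 := by
  constructor
  · rcases le_total (1 - max z 0) 0 with h | h
    · rw [clampF, max_eq_right h]; norm_num
    · rw [clampF, max_eq_left h]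
      simp only [sub_sub_cancel, le_max_iff]
      right; rfl
  · rw [clampF]
    have : (0:ℝ) ≤ max (1 - max z 0) 0 := le_max_right _ _
    linarith

theorem clampF_err {z y : ℝ} (hy : y ∈ Set.Icc (0:ℝ) 1) : |clampF z - y| ≤ |z - y| := by
  obtain ⟨h0, h1⟩ := hy
  rcases le_total z 0 with h | h
  · rw [clampF, max_eq_right h, sub_zero, max_eq_left (by linarith), sub_self]
    rw [abs_of_nonpos (by linarith), abs_of_nonpos (by linarith)]
    linarith
  · rcases le_total z 1 with h2 | h2
    · rw [clampF, max_eq_left h, max_eq_left (by linarith), sub_sub_cancel]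
    · rw [clampF, max_eq_left h, max_eq_right (by linarith), sub_zero]
      rw [abs_of_nonneg (by linarith), abs_of_nonneg (by linarith)]
      linarith

theorem multF_err {n : ℕ} (hn : 0 < n) (s : ℕ) {a b : ℝ}
    (ha : a ∈ Set.Icc (0:ℝ) 1) (hb : b ∈ Set.Icc (0:ℝ) 1) :
    |multF n s a b - a*b| ≤ 3 * ((1/(n:ℝ)^2)^s / 4) := by
  have hu : (a+b)/2 ∈ Set.Icc (0:ℝ) 1 := by
    obtain ⟨ha0, ha1⟩ := ha; obtain ⟨hb0, hb1⟩ := hb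
    constructor <;> [linarith; linarith]
  have e1 := Ffun_err hn s _ hu
  have e2 := Ffun_err hn s _ ha
  have e3 := Ffun_err hn s _ hb
  have key : multF n s a b - a*b
      = 2 * (Ffun n s ((a+b)/2) - ((a+b)/2)^2) - (Ffun n s a - a^2)/2 - (Ffun n s b - b^2)/2 := by
    rw [multF]; ring
  rw [key]
  calc |2 * (Ffun n s ((a+b)/2) - ((a+b)/2)^2) - (Ffun n s a - a^2)/2 - (Ffun n s b - b^2)/2|
      ≤ |2 * (Ffun n s ((a+b)/2) - ((a+b)/2)^2)| + |(Ffun n s a - a^2)/2| + |(Ffun n s b - b^2)/2| := by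
        exact (abs_sub _ _).trans (by gcongr; exact abs_sub _ _)
    _ ≤ 3 * ((1/(n:ℝ)^2)^s / 4) := by
        rw [abs_mul, abs_div, abs_div]
        simp only [abs_two]
        linarith [abs_nonneg (Ffun n s ((a+b)/2) - ((a+b)/2)^2)]


/-! ### The network -/

abbrev Lane (n k : ℕ) : Type := (Fin k) ⊕ (Fin 3 × (Fin n ⊕ Bool))

def act {ι : Type} (A : (ι → ℝ) → (ι → ℝ)) (st : ι → ℝ) : ι → ℝ := fun a => max (A st a) 0

def gRead (n k : ℕ) (u : Fin 3) (st : Lane n k → ℝ) : ℝ :=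
  ∑ i : Fin n, gcoef n i * st (.inr (u, .inl i))

def eRead (n k : ℕ) (u : Fin 3) (st : Lane n k → ℝ) : ℝ :=
  ∑ i : Fin n, ecoef n i * st (.inr (u, .inl i))

def iterL (n k : ℕ) (st : Lane n k → ℝ) : Lane n k → ℝ
  | .inl j => st (.inl j)
  | .inr (u, .inl i) => gRead n k u st - (i:ℝ)/n
  | .inr (u, .inr false) => (n:ℝ)^2 * st (.inr (u, .inr false)) + (n:ℝ)^2 * eRead n k u st
  | .inr (u, .inr true) => st (.inr (u, .inr true))

def fRead (n k s : ℕ) (u : Fin 3) (st : Lane n k → ℝ) : ℝ :=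
  st (.inr (u, .inr true)) - (1/(n:ℝ)^2)^(s-1) * (st (.inr (u, .inr false)) + eRead n k u st)

def clamp1L (n k s : ℕ) (st : Lane n k → ℝ) : Lane n k → ℝ
  | .inl j => st (.inl j)
  | .inr (_, .inl _) => 0
  | .inr (_, .inr false) => 0
  | .inr (u, .inr true) =>
      if u = 0 then 2 * fRead n k s 2 st - fRead n k s 0 st / 2 - fRead n k s 1 st / 2 else 0

def clamp2L (n k : ℕ) (st : Lane n k → ℝ) : Lane n k → ℝ
  | .inl j => st (.inl j)
  | .inr (_, .inl _) => 0
  | .inr (_, .inr false) => 0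
  | .inr (u, .inr true) => if u = 0 then 1 - st (.inr (0, .inr true)) else 0

def tv (a b : ℝ) : Fin 3 → ℝ :=
  fun u => if u = 0 then a else if u = 1 then b else (a+b)/2

def tval (n k : ℕ) (c : Fin k) (st : Lane n k → ℝ) : Fin 3 → ℝ :=
  tv (1 - st (.inr (0, .inr true))) (st (.inl c))

def initL (n k : ℕ) (c : Fin k) (st : Lane n k → ℝ) : Lane n k → ℝ
  | .inl j => st (.inl j)
  | .inr (u, .inl i) => tval n k c st u - (i:ℝ)/n
  | .inr (_, .inr false) => 0
  | .inr (u, .inr true) => tval n k c st u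

def A0L (n k d : ℕ) (y : ℕ → (Fin d → ℝ) → ℝ) (x : Fin d → ℝ) : Lane n k → ℝ
  | .inl j => y j x
  | .inr (u, .inl i) => tv (y 0 x) (y 1 x) u - (i:ℝ)/n
  | .inr (_, .inr false) => 0
  | .inr (u, .inr true) => tv (y 0 x) (y 1 x) u

/-! #### affinity of the layers -/

theorem tv_aff {ι : Type} [Fintype ι] {f g : (ι → ℝ) → ℝ} (hf : AffF ι f) (hg : AffF ι g)
    (u : Fin 3) : AffF ι (fun st => tv (f st) (g st) u) := by
  rcases eq_or_ne u 0 with h | h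
  · simpa [tv, h] using hf
  · rcases eq_or_ne u 1 with h1 | h1
    · simpa [tv, h, h1] using hg
    · have : (fun st => tv (f st) (g st) u) = fun st => (2:ℝ)⁻¹ * (f st + g st) := by
        funext st; simp [tv, h, h1]; ring
      rw [this]
      exact (hf.add hg).smul 2⁻¹

theorem gRead_aff (n k : ℕ) (u : Fin 3) : AffF (Lane n k) (gRead n k u) :=
  AffF.sum _ _ fun i _ => (AffF.proj _).smul (gcoef n i)

theorem eRead_aff (n k : ℕ) (u : Fin 3) : AffF (Lane n k) (eRead n k u) :=
  AffF.sum _ _ fun i _ => (AffF.proj _).smul (ecoef n i)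

theorem iterL_aff (n k : ℕ) : ∀ a, AffF (Lane n k) (fun st => iterL n k st a) := by
  rintro (j | ⟨u, i | (b | b)⟩)
  · simp only [iterL]; exact AffF.proj _
  · simp only [iterL]; exact (gRead_aff n k u).sub (AffF.const _)
  · simp only [iterL]
    exact ((AffF.proj _).smul ((n:ℝ)^2)).add ((eRead_aff n k u).smul ((n:ℝ)^2))
  · simp only [iterL]; exact AffF.proj _

theorem fRead_aff (n k s : ℕ) (u : Fin 3) : AffF (Lane n k) (fRead n k s u) := by
  refine (AffF.proj _).sub (((AffF.proj _).add (eRead_aff n k u)).smul _)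

theorem clamp1L_aff (n k s : ℕ) : ∀ a, AffF (Lane n k) (fun st => clamp1L n k s st a) := by
  rintro (j | ⟨u, i | (b | b)⟩)
  · simp only [clamp1L]; exact AffF.proj _
  · simp only [clamp1L]; exact AffF.const _
  · simp only [clamp1L]; exact AffF.const _
  · simp only [clamp1L]
    rcases eq_or_ne u 0 with h | h
    · simp only [h, if_true]
      exact AffF.congr ((((fRead_aff n k s 2).smul 2).sub ((fRead_aff n k s 0).smul 2⁻¹)).sub
        ((fRead_aff n k s 1).smul 2⁻¹)) (fun st => by ring)
    · simp only [h, if_false]; exact AffF.const _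

theorem clamp2L_aff (n k : ℕ) : ∀ a, AffF (Lane n k) (fun st => clamp2L n k st a) := by
  rintro (j | ⟨u, i | (b | b)⟩)
  · simp only [clamp2L]; exact AffF.proj _
  · simp only [clamp2L]; exact AffF.const _
  · simp only [clamp2L]; exact AffF.const _
  · simp only [clamp2L]
    rcases eq_or_ne u 0 with h | h
    · simp only [h, if_true]; exact (AffF.const 1).sub (AffF.proj _)
    · simp only [h, if_false]; exact AffF.const _

theorem initL_aff (n k : ℕ) (c : Fin k) : ∀ a, AffF (Lane n k) (fun st => initL n k c st a) := by
  have htv : ∀ u, AffF (Lane n k) (fun st => tval n k c st u) := by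
    intro u
    exact tv_aff ((AffF.const 1).sub (AffF.proj _)) (AffF.proj _) u
  rintro (j | ⟨u, i | (b | b)⟩)
  · simp only [initL]; exact AffF.proj _
  · simp only [initL]; exact (htv u).sub (AffF.const _)
  · simp only [initL]; exact AffF.const _
  · simp only [initL]; exact htv u

theorem A0L_aff (n k d : ℕ) (y : ℕ → (Fin d → ℝ) → ℝ) (hy : ∀ j, AffF (Fin d) (y j)) :
    ∀ a, AffF (Fin d) (fun x => A0L n k d y x a) := by
  rintro (j | ⟨u, i | (b | b)⟩)
  · simp only [A0L]; exact hy j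
  · simp only [A0L]; exact (tv_aff (hy 0) (hy 1) u).sub (AffF.const _)
  · simp only [A0L]; exact AffF.const _
  · simp only [A0L]; exact tv_aff (hy 0) (hy 1) u


/-! #### semantics of the layers -/

def SqSt (n k : ℕ) (t : Fin 3 → ℝ) (r : ℕ) (cv : Fin k → ℝ) (st : Lane n k → ℝ) : Prop :=
  (∀ j, st (.inl j) = cv j) ∧
  (∀ u i, st (.inr (u, .inl i)) = max ((gfun n)^[r] (t u) - (i:ℝ)/n) 0) ∧
  (∀ u, st (.inr (u, .inr false)) = Vfun n (t u) r) ∧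
  (∀ u, st (.inr (u, .inr true)) = t u)

def EndSt (n k : ℕ) (cv : Fin k → ℝ) (w : ℝ) (st : Lane n k → ℝ) : Prop :=
  (∀ j, st (.inl j) = cv j) ∧ st (.inr (0, .inr true)) = w

theorem gRead_eq (n k : ℕ) (u : Fin 3) (τ : ℝ) (st : Lane n k → ℝ)
    (h : ∀ i : Fin n, st (.inr (u, .inl i)) = max (τ - (i:ℝ)/n) 0) :
    gRead n k u st = gfun n τ := by
  rw [gRead, gfun, ← Fin.sum_univ_eq_sum_range]
  exact Finset.sum_congr rfl fun i _ => by rw [h i]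

theorem eRead_eq (n k : ℕ) (u : Fin 3) (τ : ℝ) (st : Lane n k → ℝ)
    (h : ∀ i : Fin n, st (.inr (u, .inl i)) = max (τ - (i:ℝ)/n) 0) :
    eRead n k u st = Efun n τ := by
  rw [eRead, Efun, ← Fin.sum_univ_eq_sum_range]
  exact Finset.sum_congr rfl fun i _ => by rw [h i]

theorem iter_step {n k : ℕ} (hn : 0 < n) {t : Fin 3 → ℝ} {r : ℕ} {cv : Fin k → ℝ}
    {st : Lane n k → ℝ} (hst : SqSt n k t r cv st)
    (ht : ∀ u, t u ∈ Set.Icc (0:ℝ) 1) (hcv : ∀ j, 0 ≤ cv j) :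
    SqSt n k t (r+1) cv (act (iterL n k) st) := by
  obtain ⟨hc, hrel, hS, ht0⟩ := hst
  have hg : ∀ u, gRead n k u st = gfun n ((gfun n)^[r] (t u)) :=
    fun u => gRead_eq n k u _ st (hrel u)
  have he : ∀ u, eRead n k u st = Efun n ((gfun n)^[r] (t u)) :=
    fun u => eRead_eq n k u _ st (hrel u)
  refine ⟨fun j => ?_, fun u i => ?_, fun u => ?_, fun u => ?_⟩
  · simp only [act, iterL, hc j]
    exact max_eq_left (hcv j)
  · simp only [act, iterL, hg u]
    rw [Function.iterate_succ_apply']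
  · simp only [act, iterL, hS u, he u]
    rw [show (n:ℝ)^2 * Vfun n (t u) r + (n:ℝ)^2 * Efun n ((gfun n)^[r] (t u))
        = Vfun n (t u) (r+1) from rfl]
    exact max_eq_left (Vfun_nonneg hn (ht u) (r+1))
  · simp only [act, iterL, ht0 u]
    exact max_eq_left (ht u).1

theorem iter_steps {n k : ℕ} (hn : 0 < n) {t : Fin 3 → ℝ} {cv : Fin k → ℝ}
    {st : Lane n k → ℝ} (hst : SqSt n k t 0 cv st)
    (ht : ∀ u, t u ∈ Set.Icc (0:ℝ) 1) (hcv : ∀ j, 0 ≤ cv j) (r : ℕ) :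
    SqSt n k t r cv ((act (iterL n k))^[r] st) := by
  induction r with
  | zero => simpa using hst
  | succ r ih =>
    rw [Function.iterate_succ_apply']
    exact iter_step hn ih ht hcv

theorem clamp_step {n k s : ℕ} (hn : 0 < n) (hs : 1 ≤ s) {t : Fin 3 → ℝ} {cv : Fin k → ℝ}
    {st : Lane n k → ℝ} (hst : SqSt n k t (s-1) cv st) (hcv : ∀ j, 0 ≤ cv j) :
    EndSt n k cv
      (1 - clampF (2 * Ffun n s (t 2) - Ffun n s (t 0) / 2 - Ffun n s (t 1) / 2))
      (act (clamp2L n k) (act (clamp1L n k s) st)) := by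
  obtain ⟨hc, hrel, hS, ht0⟩ := hst
  have hf : ∀ u, fRead n k s u st = Ffun n s (t u) := by
    intro u
    rw [fRead, eRead_eq n k u _ st (hrel u), hS u, ht0 u, Ffun_V hn s hs]
  have h1 : ∀ j, max (clamp1L n k s st (.inl j)) 0 = cv j := by
    intro j
    simp only [clamp1L, hc j]
    exact max_eq_left (hcv j)
  have h2 : max (clamp1L n k s st (.inr (0, .inr true))) 0
      = max (2 * Ffun n s (t 2) - Ffun n s (t 0) / 2 - Ffun n s (t 1) / 2) 0 := by
    simp only [clamp1L, if_true, eq_self_iff_true, hf]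
  refine ⟨fun j => ?_, ?_⟩
  · show max (clamp2L n k (act (clamp1L n k s) st) (.inl j)) 0 = cv j
    simp only [clamp2L, act, h1 j]
    exact max_eq_left (hcv j)
  · show max (clamp2L n k (act (clamp1L n k s) st) (.inr (0, .inr true))) 0
      = 1 - clampF (2 * Ffun n s (t 2) - Ffun n s (t 0) / 2 - Ffun n s (t 1) / 2)
    simp only [clamp2L, act, if_true, eq_self_iff_true, h2, clampF]
    ring_nf


theorem tv_mem {a b : ℝ} (ha : a ∈ Set.Icc (0:ℝ) 1) (hb : b ∈ Set.Icc (0:ℝ) 1) :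
    ∀ u, tv a b u ∈ Set.Icc (0:ℝ) 1 := by
  obtain ⟨ha0, ha1⟩ := ha; obtain ⟨hb0, hb1⟩ := hb
  intro u
  rw [tv]
  split_ifs
  · exact ⟨ha0, ha1⟩
  · exact ⟨hb0, hb1⟩
  · constructor <;> [linarith; linarith]

theorem init_step {n k : ℕ} (c : Fin k) {cv : Fin k → ℝ} {w : ℝ} {st : Lane n k → ℝ}
    (hst : EndSt n k cv w st) (hw : 1 - w ∈ Set.Icc (0:ℝ) 1)
    (hb : cv c ∈ Set.Icc (0:ℝ) 1) (hcv : ∀ j, 0 ≤ cv j) :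
    SqSt n k (tv (1-w) (cv c)) 0 cv (act (initL n k c) st) := by
  obtain ⟨hc, hq⟩ := hst
  have htval : ∀ u, tval n k c st u = tv (1-w) (cv c) u := by
    intro u
    rw [tval, hq, hc c]
  have htm := tv_mem hw hb
  refine ⟨fun j => ?_, fun u i => ?_, fun u => ?_, fun u => ?_⟩
  · simp only [act, initL, hc j]
    exact max_eq_left (hcv j)
  · simp only [act, initL, htval u, Function.iterate_zero_apply]
  · simp only [act, initL, Vfun]
    exact max_self 0
  · simp only [act, initL, htval u]
    exact max_eq_left (htm u).1

theorem A0_step {n k d : ℕ} (y : ℕ → (Fin d → ℝ) → ℝ) (x : Fin d → ℝ)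
    (hy : ∀ j : ℕ, y j x ∈ Set.Icc (0:ℝ) 1) :
    SqSt n k (tv (y 0 x) (y 1 x)) 0 (fun j : Fin k => y j x)
      (fun a => max (A0L n k d y x a) 0) := by
  have htm := tv_mem (hy 0) (hy 1)
  refine ⟨fun j => ?_, fun u i => ?_, fun u => ?_, fun u => ?_⟩
  · simp only [A0L]
    exact max_eq_left (hy j).1
  · simp only [A0L, Function.iterate_zero_apply]
  · simp only [A0L, Vfun]
    exact max_self 0
  · simp only [A0L]
    exact max_eq_left (htm u).1

/-! #### the assembled network -/

def bodyF (n k s : ℕ) : (Lane n k → ℝ) → (Lane n k → ℝ) :=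
  fun st => act (clamp2L n k) (act (clamp1L n k s) ((act (iterL n k))^[s-1] st))

def chainF (n k s : ℕ) (hk : 0 < k) : ℕ → (Lane n k → ℝ) → (Lane n k → ℝ)
  | 0 => bodyF n k s
  | j+1 => fun st =>
      bodyF n k s (act (initL n k ⟨min (j+2) (k-1), by omega⟩) (chainF n k s hk j st))

theorem seg_precomp_iter {ι : Type} [Fintype ι] {T : ℕ} {F : (ι → ℝ) → (ι → ℝ)}
    (hF : Seg ι T F) (A : (ι → ℝ) → (ι → ℝ)) (hA : ∀ a, AffF ι (fun st => A st a)) (r : ℕ) :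
    Seg ι (T + r) (fun st => F ((act A)^[r] st)) := by
  induction r with
  | zero => simpa using hF
  | succ r ih =>
    have : (fun st => F ((act A)^[r+1] st))
        = fun st => (fun st' => F ((act A)^[r] st')) (fun a => max (A st a) 0) := by
      funext st
      rw [Function.iterate_succ_apply]
      rfl
    rw [this]
    exact Seg.step A hA ih

theorem seg_body (n k s : ℕ) (hs : 1 ≤ s) : Seg (Lane n k) (s+1) (bodyF n k s) := by
  have h2 : Seg (Lane n k) 2 (fun st => act (clamp2L n k) (act (clamp1L n k s) st)) := by
    have h1 : Seg (Lane n k) 1 (fun st => act (clamp2L n k) st) := by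
      have := Seg.step (ι := Lane n k) (clamp2L n k) (clamp2L_aff n k) Seg.id
      exact this
    exact Seg.step (clamp1L n k s) (clamp1L_aff n k s) h1
  have := seg_precomp_iter h2 (iterL n k) (iterL_aff n k) (s-1)
  have heq : 2 + (s-1) = s + 1 := by omega
  rw [heq] at this
  exact this

theorem seg_chain (n k s : ℕ) (hk : 0 < k) (hs : 1 ≤ s) (j : ℕ) :
    Seg (Lane n k) ((s+1) + j*(s+2)) (chainF n k s hk j) := by
  induction j with
  | zero => simpa [chainF] using seg_body n k s hs
  | succ j ih =>
    have hstage : Seg (Lane n k) (s+2)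
        (fun st => bodyF n k s (act (initL n k ⟨min (j+2) (k-1), by omega⟩) st)) :=
      Seg.step _ (initL_aff n k _) (seg_body n k s hs)
    have := ih.comp hstage
    have heq : (s+2) + ((s+1) + j*(s+2)) = (s+1) + (j+1)*(s+2) := by ring
    rw [heq] at this
    exact this

/-! #### semantics of the assembled network -/

def Qseq (n s : ℕ) (yv : ℕ → ℝ) : ℕ → ℝ
  | 0 => yv 0
  | j+1 => clampF (multF n s (Qseq n s yv j) (yv (j+1)))

theorem Qseq_mem {n s : ℕ} {yv : ℕ → ℝ} (hyv : ∀ j, yv j ∈ Set.Icc (0:ℝ) 1) (j : ℕ) :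
    Qseq n s yv j ∈ Set.Icc (0:ℝ) 1 := by
  cases j with
  | zero => exact hyv 0
  | succ j => exact clampF_mem _

theorem body_sem {n k s : ℕ} (hn : 0 < n) (hs : 1 ≤ s) {a b : ℝ} {cv : Fin k → ℝ}
    {st : Lane n k → ℝ} (hst : SqSt n k (tv a b) 0 cv st)
    (ha : a ∈ Set.Icc (0:ℝ) 1) (hb : b ∈ Set.Icc (0:ℝ) 1) (hcv : ∀ j, 0 ≤ cv j) :
    EndSt n k cv (1 - clampF (multF n s a b)) (bodyF n k s st) := by
  have htm := tv_mem ha hb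
  have hiter := iter_steps hn hst htm hcv (s-1)
  have := clamp_step hn hs hiter hcv
  have heq : 2 * Ffun n s (tv a b 2) - Ffun n s (tv a b 0) / 2 - Ffun n s (tv a b 1) / 2
      = multF n s a b := by
    have e0 : tv a b 0 = a := rfl
    have e1 : tv a b 1 = b := rfl
    have e2 : tv a b 2 = (a+b)/2 := rfl
    rw [e0, e1, e2, multF]
  rw [heq] at this
  exact this

theorem chain_sem {n k s : ℕ} (hn : 0 < n) (hk : 0 < k) (hs : 1 ≤ s)
    {yv : ℕ → ℝ} (hyv : ∀ j, yv j ∈ Set.Icc (0:ℝ) 1)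
    {st : Lane n k → ℝ} (hst : SqSt n k (tv (yv 0) (yv 1)) 0 (fun j : Fin k => yv j) st) :
    ∀ j : ℕ, j + 2 ≤ k →
      EndSt n k (fun j' : Fin k => yv j') (1 - Qseq n s yv (j+1)) (chainF n k s hk j st) := by
  have hcv : ∀ j' : Fin k, 0 ≤ yv (j' : ℕ) := fun j' => (hyv j').1
  intro j
  induction j with
  | zero =>
    intro _
    have := body_sem hn hs hst (hyv 0) (hyv 1) hcv
    rw [show chainF n k s hk 0 = bodyF n k s from rfl]
    exact this
  | succ j ih =>
    intro hjk
    have hQ := Qseq_mem (n := n) (s := s) hyv (j+1)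
    have hQ' : 1 - (1 - Qseq n s yv (j+1)) ∈ Set.Icc (0:ℝ) 1 := by
      rw [sub_sub_cancel]; exact hQ
    have hcfin : (⟨min (j+2) (k-1), by omega⟩ : Fin k) = ⟨j+2, by omega⟩ :=
      Fin.ext (by simp; omega)
    have hchain : chainF n k s hk (j+1) st
        = bodyF n k s (act (initL n k ⟨j+2, by omega⟩) (chainF n k s hk j st)) := by
      rw [chainF, hcfin]
    have hinit := init_step (⟨j+2, by omega⟩ : Fin k) (ih (by omega)) hQ' (hyv _) hcv
    rw [sub_sub_cancel] at hinit
    have hbody := body_sem (s := s) hn hs hinit hQ (hyv (j+2)) hcv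
    rw [hchain]
    exact hbody


/-! #### accumulated error along the chain -/

theorem Qseq_err {n s : ℕ} (hn : 0 < n) {yv : ℕ → ℝ} (hyv : ∀ j, yv j ∈ Set.Icc (0:ℝ) 1) :
    ∀ j, |Qseq n s yv j - ∏ i ∈ Finset.range (j+1), yv i|
      ≤ j * (3 * ((1/(n:ℝ)^2)^s / 4)) := by
  intro j
  induction j with
  | zero => simp [Qseq, Finset.prod_range_one]
  | succ j ih =>
    have hP : ∏ i ∈ Finset.range (j+1), yv i ∈ Set.Icc (0:ℝ) 1 := by
      constructor
      · exact Finset.prod_nonneg fun i _ => (hyv i).1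
      · exact Finset.prod_le_one (fun i _ => (hyv i).1) (fun i _ => (hyv i).2)
    have hPy : ∏ i ∈ Finset.range (j+2), yv i
        = (∏ i ∈ Finset.range (j+1), yv i) * yv (j+1) := Finset.prod_range_succ yv (j+1)
    have hPy_mem : (∏ i ∈ Finset.range (j+1), yv i) * yv (j+1) ∈ Set.Icc (0:ℝ) 1 := by
      constructor
      · exact mul_nonneg hP.1 (hyv (j+1)).1
      · exact mul_le_one₀ hP.2 (hyv (j+1)).1 (hyv (j+1)).2
    have hQm := Qseq_mem (n := n) (s := s) hyv j
    have hmerr := multF_err hn s hQm (hyv (j+1))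
    calc |Qseq n s yv (j+1) - ∏ i ∈ Finset.range (j+1+1), yv i|
        = |clampF (multF n s (Qseq n s yv j) (yv (j+1)))
            - (∏ i ∈ Finset.range (j+1), yv i) * yv (j+1)| := by rw [Qseq, hPy]
      _ ≤ |multF n s (Qseq n s yv j) (yv (j+1))
            - (∏ i ∈ Finset.range (j+1), yv i) * yv (j+1)| := clampF_err hPy_mem
      _ ≤ |multF n s (Qseq n s yv j) (yv (j+1)) - Qseq n s yv j * yv (j+1)|
            + |Qseq n s yv j * yv (j+1) - (∏ i ∈ Finset.range (j+1), yv i) * yv (j+1)| := by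
          exact abs_sub_le _ _ _
      _ ≤ 3 * ((1/(n:ℝ)^2)^s / 4)
            + |Qseq n s yv j - ∏ i ∈ Finset.range (j+1), yv i| * |yv (j+1)| := by
          rw [← sub_mul, abs_mul]
          exact add_le_add hmerr le_rfl
      _ ≤ 3 * ((1/(n:ℝ)^2)^s / 4) + j * (3 * ((1/(n:ℝ)^2)^s / 4)) := by
          have hy1 : |yv (j+1)| ≤ 1 :=
            abs_le.mpr ⟨by linarith [(hyv (j+1)).1], (hyv (j+1)).2⟩
          have h1 : |Qseq n s yv j - ∏ i ∈ Finset.range (j+1), yv i| * |yv (j+1)|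
              ≤ j * (3 * ((1/(n:ℝ)^2)^s / 4)) := by
            calc |Qseq n s yv j - ∏ i ∈ Finset.range (j+1), yv i| * |yv (j+1)|
                ≤ |Qseq n s yv j - ∏ i ∈ Finset.range (j+1), yv i| * 1 :=
                  mul_le_mul_of_nonneg_left hy1 (abs_nonneg _)
              _ = |Qseq n s yv j - ∏ i ∈ Finset.range (j+1), yv i| := mul_one _
              _ ≤ _ := ih
          exact add_le_add le_rfl h1
      _ = (j+1 : ℕ) * (3 * ((1/(n:ℝ)^2)^s / 4)) := by push_cast; ring

/-! #### the factor list -/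

theorem y_prod {d : ℕ} (l : List (Fin d)) (K : ℕ) (hK : l.length ≤ K) (x : Fin d → ℝ) :
    ∏ j ∈ Finset.range K, (if h : j < l.length then x (l.get ⟨j, h⟩) else 1)
      = (l.map x).prod := by
  rw [← Finset.prod_range_mul_prod_Ico _ hK]
  have h2 : ∏ j ∈ Finset.Ico l.length K,
      (if h : j < l.length then x (l.get ⟨j, h⟩) else 1) = 1 := by
    apply Finset.prod_eq_one
    intro j hj
    rw [dif_neg (Nat.not_lt.2 (Finset.mem_Ico.mp hj).1)]
  rw [h2, mul_one]
  rw [← Fin.prod_univ_eq_prod_range (fun j => if h : j < l.length then x (l.get ⟨j, h⟩) else 1)]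
  calc (∏ i : Fin l.length, if h : (i:ℕ) < l.length then x (l.get ⟨(i:ℕ), h⟩) else 1)
      = ∏ i : Fin l.length, x l[(i:ℕ)] := by
        refine Finset.prod_congr rfl fun i _ => ?_
        rw [dif_pos i.isLt, List.get_eq_getElem]
    _ = (List.map x l).prod := by rw [← List.prod_ofFn, List.ofFn_getElem_eq_map]

theorem mono_prod {d : ℕ} (α : Fin d → ℕ) (x : Fin d → ℝ) :
    ((((List.finRange d).flatMap fun i => List.replicate (α i) i)).map x).prod
      = ∏ i, x i ^ α i := by
  rw [List.map_flatMap, List.flatMap, List.prod_flatten, List.map_map]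
  have : (List.prod ∘ fun a => List.map x (List.replicate (α a) a))
      = fun a => x a ^ α a := by
    funext a
    simp [List.map_replicate, List.prod_replicate]
  rw [this, ← List.ofFn_eq_map, List.prod_ofFn]

theorem mono_len {d : ℕ} (α : Fin d → ℕ) :
    ((List.finRange d).flatMap fun i => List.replicate (α i) i).length = ∑ i, α i := by
  rw [List.length_flatMap]
  have : (List.length ∘ fun i : Fin d => List.replicate (α i) i) = fun i => α i := by
    funext i
    simp
  simp only [List.length_replicate]
  rw [← List.ofFn_eq_map, List.sum_ofFn]


/-- Proposition 4.1: ReLU FNNs of width `9(N+1)+k-1` and depth `7k²L` approximate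
the monomial `x^α`, `‖α‖₁ ≤ k`, within `9k(N+1)^{-7kL}` on `[0,1]^d`. -/
theorem relu_approx_monomial
    (d k : ℕ) (hd : 0 < d) (hk : 0 < k)
    (α : Fin d → ℕ) (hα : (∑ i, α i) ≤ k)
    (N L : ℕ) (hN : 0 < N) (hL : 0 < L) :
    ∃ φ : (Fin d → ℝ) → ℝ,
      ImplementedBy d (9 * ((N : ℝ) + 1) + k - 1) (7 * (k : ℝ) ^ 2 * L) φ ∧
      ∀ x ∈ unitCube d,
        |φ x - ∏ i, (x i) ^ (α i)| ≤ 9 * k * ((N : ℝ) + 1) ^ (-(7 * (k : ℝ) * L)) := by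
  classical
  set n : ℕ := N + 1 with hn_def
  set s : ℕ := 4 * k * L with hs_def
  obtain ⟨K2, hKeq⟩ : ∃ K2, max k 2 = K2 + 2 := ⟨max k 2 - 2, by omega⟩
  set K : ℕ := K2 + 2 with hK_def
  have hmaxc := max_choice k 2
  have hmax1 := le_max_left k 2
  have hmax2 := le_max_right k 2
  have hn : 0 < n := by omega
  have hkK : k ≤ K := by omega
  have hK2k : K2 + 1 ≤ k := by rcases hmaxc with h | h <;> omega
  have hkL : 0 < k * L := Nat.mul_pos hk hL
  have hs4 : s = 4 * (k * L) := by rw [hs_def]; ring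
  have hs1 : 1 ≤ s := by omega
  have hK0 : 0 < K := by omega
  set l : List (Fin d) := (List.finRange d).flatMap (fun i => List.replicate (α i) i)
    with hl_def
  have hlen : l.length = ∑ i, α i := mono_len α
  have hlenK : l.length ≤ K := by omega
  set y : ℕ → (Fin d → ℝ) → ℝ :=
    fun j x => if h : j < l.length then x (l.get ⟨j, h⟩) else 1 with hy_def
  have hy_aff : ∀ j, AffF (Fin d) (y j) := by
    intro j
    by_cases h : j < l.length
    · simp only [hy_def, dif_pos h]; exact AffF.proj _
    · simp only [hy_def, dif_neg h]; exact AffF.const 1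
  have hcard : Fintype.card (Lane n K) = K + 3 * (n + 2) := by
    simp [Lane]
  have hm : 0 < Fintype.card (Lane n K) := by rw [hcard]; omega
  have hW : ((Fintype.card (Lane n K) : ℝ)) ≤ 9 * ((N : ℝ) + 1) + k - 1 := by
    rw [hcard]
    have hK1 : (K : ℝ) ≤ (k : ℝ) + 1 := by
      have : K ≤ k + 1 := by rcases hmaxc with h | h <;> omega
      exact_mod_cast this
    have hN1 : (1 : ℝ) ≤ (N : ℝ) := by exact_mod_cast hN
    have : ((K + 3 * (n + 2) : ℕ) : ℝ) = (K : ℝ) + 3 * ((N : ℝ) + 3) := by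
      rw [hn_def]; push_cast; ring
    rw [this]
    linarith
  have hdep : (s + 1) + K2 * (s + 2) + 1 ≤ 7 * k ^ 2 * L := by
    have e1 : (s + 1) + K2 * (s + 2) + 1 = (K2 + 1) * (s + 2) := by ring
    have e2 : (K2 + 1) * (s + 2) ≤ k * (s + 2) := Nat.mul_le_mul_right _ hK2k
    have e3 : k * (s + 2) = 4 * (k * (k * L)) + 2 * k := by rw [hs_def]; ring
    have e4 : 7 * k ^ 2 * L = 7 * (k * (k * L)) := by ring
    have e5 : k * 1 ≤ k * (k * L) := Nat.mul_le_mul_left k hkL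
    omega
  refine ⟨fun x => 1 - chainF n K s hK0 K2
      (fun a => max (A0L n K d y x a) 0) (Sum.inr (0, Sum.inr true)), ⟨(s + 1) + K2 * (s + 2) + 1, ?_, ?_⟩, ?_⟩
  · have h1 : (((s + 1) + K2 * (s + 2) + 1 : ℕ) : ℝ) ≤ ((7 * k ^ 2 * L : ℕ) : ℝ) :=
      Nat.cast_le.mpr hdep
    have h2 : ((7 * k ^ 2 * L : ℕ) : ℝ) = 7 * (k : ℝ) ^ 2 * L := by push_cast; ring
    rw [h2] at h1
    exact h1
  · exact seg_to_net (Fintype.equivFin (Lane n K)) hm hW (seg_chain n K s hK0 hs1 K2)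
      (A0L n K d y) (A0L_aff n K d y hy_aff)
      (fun st => 1 - st (Sum.inr (0, Sum.inr true)))
      ((AffF.const 1).sub (AffF.proj _))
  · intro x hx
    obtain ⟨hx0, hx1⟩ := hx
    have hy_mem : ∀ j : ℕ, y j x ∈ Set.Icc (0:ℝ) 1 := by
      intro j
      by_cases h : j < l.length
      · simp only [hy_def, dif_pos h]
        exact ⟨by simpa using hx0 (l.get ⟨j, h⟩), by simpa using hx1 (l.get ⟨j, h⟩)⟩
      · simp only [hy_def, dif_neg h]
        exact ⟨zero_le_one, le_rfl⟩
    have hst0 := A0_step (n := n) (k := K) y x hy_mem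
    have hend := chain_sem hn hK0 hs1 hy_mem hst0 K2 (by omega)
    have hφx : (1 : ℝ) - chainF n K s hK0 K2
        (fun a => max (A0L n K d y x a) 0) (Sum.inr (0, Sum.inr true))
        = Qseq n s (fun j => y j x) (K2 + 1) := by
      rw [hend.2]; ring
    have hprod : ∏ i ∈ Finset.range (K2 + 1 + 1), (fun j => y j x) i
        = ∏ i, x i ^ α i := by
      have h1 := y_prod l K hlenK x
      have h2 := mono_prod α x
      calc ∏ i ∈ Finset.range (K2 + 1 + 1), (fun j => y j x) i
          = ∏ j ∈ Finset.range K, (if h : j < l.length then x (l.get ⟨j, h⟩) else 1) := by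
            rfl
        _ = (l.map x).prod := h1
        _ = ∏ i, x i ^ α i := h2
    have herr := Qseq_err (s := s) hn hy_mem (K2 + 1)
    rw [hprod] at herr
    beta_reduce
    rw [hφx]
    refine herr.trans ?_
    -- numerics
    have hn1 : (1:ℝ) ≤ (n : ℝ) := by exact_mod_cast hn
    have hpow8 : (1 / (n:ℝ)^2) ^ s = ((n:ℝ) ^ (8 * (k * L)))⁻¹ := by
      rw [div_pow, one_pow, ← pow_mul, one_div]
      congr 2
      omega
    have hrpow : ((N:ℝ) + 1) ^ (-(7 * (k:ℝ) * L)) = ((n:ℝ) ^ (7 * (k * L)))⁻¹ := by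
      have hb : (0:ℝ) ≤ (N:ℝ) + 1 := by positivity
      rw [Real.rpow_neg hb]
      congr 1
      have hbn : ((N:ℝ) + 1) = (n:ℝ) := by rw [hn_def]; push_cast; ring
      rw [hbn, show (7 * (k:ℝ) * L) = ((7 * (k * L) : ℕ) : ℝ) by push_cast; ring,
        Real.rpow_natCast]
    have hmono : ((n:ℝ) ^ (8 * (k * L)))⁻¹ ≤ ((n:ℝ) ^ (7 * (k * L)))⁻¹ := by
      exact inv_anti₀ (by positivity) (pow_le_pow_right₀ hn1 (by omega))
    rw [hrpow, hpow8]
    have hk1 : ((K2 : ℝ) + 1) ≤ (k : ℝ) := by exact_mod_cast hK2k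
    have hI7 : (0:ℝ) ≤ ((n:ℝ) ^ (7 * (k * L)))⁻¹ := by positivity
    have hI8 : (0:ℝ) ≤ ((n:ℝ) ^ (8 * (k * L)))⁻¹ := by positivity
    have hcast : ((K2 + 1 : ℕ) : ℝ) = (K2 : ℝ) + 1 := by push_cast; ring
    rw [hcast]
    have hk0 : (0:ℝ) ≤ (k:ℝ) := Nat.cast_nonneg k
    nlinarith [mul_nonneg hk0 hI7, mul_nonneg hk0 hI8,
      mul_le_mul_of_nonneg_left hmono hk0]

end
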